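/- arXiv:2209.05985 — 2 statements merged into one kernel-verified Lean document; each statement's English description precedes it below -/
import Mathlib

section
/- Let I be a finite nonempty set, ε : I → {1, -1}, and for p ∈ I let W(p) be a finite multiset of positive integers of fixed size n. Suppose q ∈ I minimizes the weight-sum strictly among points of the opposite sign: for all p with ε(p) ≠ ε(q), sum(W(q)) < sum(W(p)). Then the coefficient of t^{sum(W(q))} in F(t) = ∑_{p∈I} ε(p) · t^{sum(W(p))} · ∏_{w ∈ W(p)} (1 - t^w)^{-1} has the same sign as ε(q) and in particular is nonzero; hence F ≠ 0. -/
open PowerSeries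

lemma aux_inv (w : ℕ) (hw : 0 < w) :
    (∀ k, 0 ≤ coeff k (1 - (X : PowerSeries ℚ) ^ w)⁻¹) ∧
      constantCoeff (1 - (X : PowerSeries ℚ) ^ w)⁻¹ = 1 := by
  set B := (1 - (X : PowerSeries ℚ) ^ w)⁻¹ with hB
  have hc : constantCoeff (1 - (X : PowerSeries ℚ) ^ w) = 1 := by
    simp [constantCoeff_X, hw.ne']
  have hmul : (1 - (X : PowerSeries ℚ) ^ w) * B = 1 :=
    PowerSeries.mul_inv_cancel _ (by rw [hc]; norm_num)
  have hrec : B = 1 + X ^ w * B := by linear_combination hmul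
  have key : ∀ k, 0 ≤ coeff k B := by
    intro k
    induction k using Nat.strong_induction_on with
    | _ k ih =>
      conv_rhs => rw [hrec]
      rw [map_add, coeff_one, coeff_X_pow_mul']
      have h1 : (0:ℚ) ≤ if k = 0 then 1 else 0 := by positivity
      have h2 : (0:ℚ) ≤ if w ≤ k then coeff (k - w) B else 0 := by
        split_ifs with h
        · exact ih _ (by omega)
        · exact le_rfl
      linarith
  refine ⟨key, ?_⟩
  have h0 : coeff 0 B = 1 := by
    conv_lhs => rw [hrec]
    rw [map_add, coeff_one, coeff_X_pow_mul']
    simp [hw.ne', Nat.not_le.mpr hw]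
  rw [← coeff_zero_eq_constantCoeff_apply, h0]

lemma aux_prod (S : Multiset ℕ) (hpos : ∀ w ∈ S, 0 < w) :
    (∀ k, 0 ≤ coeff k ((S.map (fun w => (1 - (X : PowerSeries ℚ) ^ w)⁻¹)).prod)) ∧
      constantCoeff ((S.map (fun w => (1 - (X : PowerSeries ℚ) ^ w)⁻¹)).prod) = 1 := by
  induction S using Multiset.induction with
  | empty =>
    constructor
    · intro k; rw [Multiset.map_zero, Multiset.prod_zero, coeff_one]; split_ifs <;> norm_num
    · simp
  | cons a s ih =>
    have ha : 0 < a := hpos a (Multiset.mem_cons_self a s)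
    obtain ⟨ih1, ih2⟩ := ih (fun w hw => hpos w (Multiset.mem_cons_of_mem hw))
    obtain ⟨ha1, ha2⟩ := aux_inv a ha
    rw [Multiset.map_cons, Multiset.prod_cons]
    constructor
    · intro k
      rw [coeff_mul]
      apply Finset.sum_nonneg
      intro x _
      exact mul_nonneg (ha1 _) (ih1 _)
    · rw [map_mul, ha2, ih2, one_mul]

/-- Let `I` be finite and nonempty, `ε : I → {1, -1}`, and `W p` a multiset of positive integers
of fixed size `n` for each `p`.  If `q` minimizes the weight-sum strictly among points of the
opposite sign, then the coefficient of `t^{(W q).sum}` in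
`F = ∑_p ε p · t^{(W p).sum} · ∏_{w ∈ W p} (1 - t^w)⁻¹` has the same sign as `ε q`
(in particular it is nonzero), and hence `F ≠ 0`. -/
theorem fixed_point_series_coeff_sign (I : Type*) [Fintype I] [Nonempty I] (n : ℕ)
    (ε : I → ℤ) (hε : ∀ p, ε p = 1 ∨ ε p = -1)
    (W : I → Multiset ℕ) (hcard : ∀ p, Multiset.card (W p) = n)
    (hpos : ∀ p, ∀ w ∈ W p, 0 < w)
    (q : I) (hq : ∀ p, ε p ≠ ε q → (W q).sum < (W p).sum)
    (F : PowerSeries ℚ)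
    (hF : F = ∑ p : I, (ε p : PowerSeries ℚ) * (PowerSeries.X : PowerSeries ℚ) ^ (W p).sum *
        ((W p).map (fun w => (1 - (PowerSeries.X : PowerSeries ℚ) ^ w)⁻¹)).prod) :
    0 < (ε q : ℚ) * PowerSeries.coeff ((W q).sum) F ∧ F ≠ 0 := by
  set G : I → PowerSeries ℚ :=
    fun p => ((W p).map (fun w => (1 - (PowerSeries.X : PowerSeries ℚ) ^ w)⁻¹)).prod with hG
  have hterm : ∀ p : I, coeff ((W q).sum)
      ((ε p : PowerSeries ℚ) * (X : PowerSeries ℚ) ^ (W p).sum * G p)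
      = (ε p : ℚ) * (if (W p).sum ≤ (W q).sum then coeff ((W q).sum - (W p).sum) (G p) else 0) := by
    intro p
    have hC : ((ε p : ℤ) : PowerSeries ℚ) = C ((ε p : ℚ)) := by
      rw [← map_intCast (C (R := ℚ)) (ε p)]
    rw [mul_assoc, hC, coeff_C_mul, coeff_X_pow_mul']
  have hcoeff : (coeff ((W q).sum)) F
      = ∑ p : I, (ε p : ℚ) * (if (W p).sum ≤ (W q).sum then coeff ((W q).sum - (W p).sum) (G p) else 0) := by
    rw [hF, map_sum]
    exact Finset.sum_congr rfl fun p _ => hterm p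
  have hsq : (ε q : ℚ) * (ε q : ℚ) = 1 := by
    rcases hε q with h | h <;> rw [h] <;> norm_num
  have hpos2 : 0 < (ε q : ℚ) * (coeff ((W q).sum)) F := by
    rw [hcoeff, Finset.mul_sum]
    apply Finset.sum_pos'
    · intro p _
      by_cases h : ε p = ε q
      · rw [h]
        rw [← mul_assoc, hsq, one_mul]
        split_ifs with hle
        · exact (aux_prod (W p) (hpos p)).1 _
        · exact le_rfl
      · rw [if_neg (not_le.mpr (hq p h)), mul_zero, mul_zero]
    · refine ⟨q, Finset.mem_univ q, ?_⟩
      rw [if_pos le_rfl, Nat.sub_self, coeff_zero_eq_constantCoeff_apply,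
        (aux_prod (W q) (hpos q)).2, mul_one, hsq]
      norm_num
  refine ⟨hpos2, ?_⟩
  intro h0
  rw [h0] at hpos2
  simp at hpos2
end

section
/- Let m be a positive integer and let d = m(m+1). The formal power series ∑_{i=0}^{2m} (-1)^i · t^{S(i)} · ∏_{j=0, j≠i}^{2m} (1 - t^{|j-i|})^{-1}, where S(i) = ∑_{j≠i} |j-i|, is nonzero; in fact the coefficient of t^d equals (-1)^m times a positive integer. -/
open PowerSeries

private lemma gauss_int (N : ℕ) : 2 * ∑ k ∈ Finset.range N, (k : ℤ) = N * (N - 1) := by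
  induction N with
  | zero => simp
  | succ n ih =>
    rw [Finset.sum_range_succ]
    push_cast
    push_cast at ih
    nlinarith [ih]

private lemma sum_abs_eq (n i : ℕ) (hi : i ≤ n) :
    2 * ∑ j ∈ Finset.range (n + 1), |(j : ℤ) - i| =
      (i : ℤ) * ((i : ℤ) + 1) + ((n : ℤ) - i) * ((n : ℤ) - i + 1) := by
  rw [Finset.range_eq_Ico, ← Finset.sum_Ico_consecutive _ (Nat.zero_le (i + 1))
    (by omega : i + 1 ≤ n + 1)]
  have h1 : ∑ j ∈ Finset.Ico 0 (i + 1), |(j : ℤ) - i|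
      = ∑ j ∈ Finset.range (i + 1), ((i : ℤ) - j) := by
    rw [← Finset.range_eq_Ico]
    refine Finset.sum_congr rfl fun j hj => ?_
    rw [Finset.mem_range] at hj
    rw [abs_sub_comm, abs_of_nonneg]
    have : (j : ℤ) ≤ i := by exact_mod_cast Nat.lt_succ_iff.mp hj
    linarith
  have h2 : ∑ j ∈ Finset.Ico (i + 1) (n + 1), |(j : ℤ) - i|
      = ∑ k ∈ Finset.range (n - i), ((k : ℤ) + 1) := by
    rw [Finset.sum_Ico_eq_sum_range]
    have hni : n + 1 - (i + 1) = n - i := by omega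
    rw [hni]
    refine Finset.sum_congr rfl fun k _ => ?_
    rw [show ((i + 1 + k : ℕ) : ℤ) - i = (k : ℤ) + 1 by push_cast; ring,
      abs_of_nonneg (by positivity)]
  rw [h1, h2]
  rw [Finset.sum_sub_distrib, Finset.sum_const, Finset.sum_add_distrib, Finset.sum_const]
  have g1 := gauss_int (i + 1)
  have g2 := gauss_int (n - i)
  have hc : ((n - i : ℕ) : ℤ) = (n : ℤ) - i := by omega
  simp only [Finset.card_range, nsmul_eq_mul]
  push_cast at g1 g2 ⊢
  rw [hc] at g2 ⊢
  nlinarith [g1, g2]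

/-- For `m ≥ 1`, the Atiyah–Hirzebruch equivariant `Â`-genus expression for the standard circle
action on `CP^{2m}`,
`∑_{i=0}^{2m} (-1)^i · t^{S i} · ∏_{j ≠ i} (1 - t^{|j-i|})⁻¹` with
`S i = ∑_{j ≠ i} |j - i|`, is a nonzero formal power series; in fact its coefficient of
`t^{m(m+1)}` equals `(-1)^m` times a positive integer. -/
theorem cp_even_A_hat_series_ne_zero (m : ℕ) (hm : 1 ≤ m)
    (S : ℕ → ℕ)
    (hS : ∀ i, S i = ∑ j ∈ (Finset.range (2 * m + 1)).erase i, ((j : ℤ) - (i : ℤ)).natAbs)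
    (F : PowerSeries ℚ)
    (hF : F = ∑ i ∈ Finset.range (2 * m + 1),
      ((-1 : ℚ) ^ i : ℚ) • ((PowerSeries.X : PowerSeries ℚ) ^ (S i) *
        ∏ j ∈ (Finset.range (2 * m + 1)).erase i,
          (1 - (PowerSeries.X : PowerSeries ℚ) ^ (((j : ℤ) - (i : ℤ)).natAbs))⁻¹)) :
    F ≠ 0 ∧ ∃ c : ℤ, 0 < c ∧ PowerSeries.coeff (R := ℚ) (m * (m + 1)) F = (-1) ^ m * (c : ℚ) := by
  have hScast : ∀ i ∈ Finset.range (2 * m + 1),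
      (S i : ℤ) = (m : ℤ) * (m + 1) + ((i : ℤ) - m) ^ 2 := by
    intro i hi
    rw [Finset.mem_range] at hi
    have hi' : i ≤ 2 * m := by omega
    have h0 : (S i : ℤ) = ∑ j ∈ Finset.range (2 * m + 1), |(j : ℤ) - i| := by
      rw [hS i, Nat.cast_sum,
        show (∑ j ∈ Finset.range (2 * m + 1), |(j : ℤ) - i|)
          = ∑ j ∈ (Finset.range (2 * m + 1)).erase i, |(j : ℤ) - i| from
          (Finset.sum_erase _ (by simp)).symm]
      exact Finset.sum_congr rfl fun j _ => (Int.abs_eq_natAbs _).symm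
    have key := sum_abs_eq (2 * m) i hi'
    rw [← h0] at key
    push_cast at key ⊢
    have key2 : 2 * (S i : ℤ) = 2 * ((m : ℤ) * (m + 1) + ((i : ℤ) - m) ^ 2) := by
      rw [key]; ring
    linarith
  have hSm : S m = m * (m + 1) := by
    have h := hScast m (Finset.mem_range.mpr (by omega))
    simp at h
    exact_mod_cast h
  have hSgt : ∀ i ∈ Finset.range (2 * m + 1), i ≠ m → m * (m + 1) < S i := by
    intro i hi hne
    have h := hScast i hi
    have hsub : (i : ℤ) - m ≠ 0 := sub_ne_zero.mpr (by exact_mod_cast hne)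
    have hpos : (0 : ℤ) < ((i : ℤ) - m) ^ 2 := by positivity
    have : ((m * (m + 1) : ℕ) : ℤ) < (S i : ℤ) := by push_cast; linarith
    exact_mod_cast this
  have hconst : (PowerSeries.constantCoeff (R := ℚ)) (∏ j ∈ (Finset.range (2 * m + 1)).erase m,
      (1 - (PowerSeries.X : PowerSeries ℚ) ^ (((j : ℤ) - (m : ℤ)).natAbs))⁻¹) = 1 := by
    rw [map_prod]
    apply Finset.prod_eq_one
    intro j hj
    have hjne : j ≠ m := Finset.ne_of_mem_erase hj
    have hne0 : ((j : ℤ) - (m : ℤ)).natAbs ≠ 0 := by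
      rw [Int.natAbs_ne_zero, sub_ne_zero]
      exact_mod_cast hjne
    rw [PowerSeries.constantCoeff_inv]
    simp [zero_pow hne0]
  have hcoeff : PowerSeries.coeff (R := ℚ) (m * (m + 1)) F = (-1) ^ m := by
    rw [hF, map_sum, Finset.sum_eq_single m]
    · rw [map_smul, hSm, smul_eq_mul, PowerSeries.coeff_X_pow_mul', if_pos le_rfl,
        Nat.sub_self, PowerSeries.coeff_zero_eq_constantCoeff_apply, hconst, mul_one]
    · intro i hi hne
      rw [map_smul, PowerSeries.coeff_X_pow_mul',
        if_neg (by have := hSgt i hi hne; omega), smul_zero]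
    · intro h
      exact absurd (Finset.mem_range.mpr (by omega)) h
  refine ⟨?_, 1, one_pos, by rw [hcoeff]; norm_num⟩
  intro h0
  rw [h0, map_zero] at hcoeff
  exact pow_ne_zero m (by norm_num : (-1 : ℚ) ≠ 0) hcoeff.symm
end
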